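/- seqPhragmén satisfies participation for unrepresented voters: for all profiles A, committee sizes k, and voters i ∈ N_A for which some W ∈ f(A,k) has W ∩ A_i = ∅, it is not the case that f(A_{-i},k) ≻_i f(A,k), where f is seqPhragmén. -/

import Mathlib

/-- An approval profile is a multiset of approval ballots (anonymous encoding):
each ballot is a nonempty subset of the candidates, and the electorate is nonempty. -/
def validProfile {C : Type*} [DecidableEq C] (A : Multiset (Finset C)) : Prop :=
  A ≠ 0 ∧ ∀ b ∈ A, b ≠ (∅ : Finset C)

/-- Kelly's extension, weak preference. -/
def KellyWeak {C : Type*} [DecidableEq C] (b : Finset C) (X Y : Set (Finset C)) : Prop :=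
  ∀ W ∈ X, ∀ W' ∈ Y, (W' ∩ b).card ≤ (W ∩ b).card

/-- Kelly's extension, strict preference. -/
def KellyStrict {C : Type*} [DecidableEq C] (b : Finset C) (X Y : Set (Finset C)) : Prop :=
  KellyWeak b X Y ∧ ∃ W ∈ X, ∃ W' ∈ Y, (W' ∩ b).card < (W ∩ b).card

/-- Phragmén load value `ℓ(c) = (1 + Σ_{i ∈ N_A(c)} y(i)) / |N_A(c)|`, where the load
function `y` is keyed by ballots (voters with equal ballots always carry equal loads). -/
def phragLoadVal {C : Type*} [DecidableEq C] (A : Multiset (Finset C))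
    (y : Finset C → ℚ) (c : C) : ℚ :=
  (1 + ((A.filter fun b => c ∈ b).map y).sum) /
    ((Multiset.card (A.filter fun b => c ∈ b) : ℚ))

/-- `phragValid A y E L`: starting from voter loads `y` and already elected candidates
`E`, the sequence `L` is a valid continuation of the seqPhragmén process: each elected
candidate is approved by some voter and minimizes the load value among unelected
candidates with nonempty support, and loads are updated accordingly. -/
def phragValid {C : Type*} [DecidableEq C] (A : Multiset (Finset C)) :
    (Finset C → ℚ) → Finset C → List C → Prop
  | _, _, [] => True
  | y, E, c :: rest =>
      c ∉ E ∧ (A.filter fun b => c ∈ b) ≠ 0 ∧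
      (∀ d : C, d ∉ E → (A.filter fun b => d ∈ b) ≠ 0 →
        phragLoadVal A y c ≤ phragLoadVal A y d) ∧
      phragValid A (fun b => if c ∈ b then phragLoadVal A y c else y b) (insert c E) rest

/-- The sequential Phragmén rule. -/
def seqPhragmen {C : Type*} [DecidableEq C] (A : Multiset (Finset C)) (k : ℕ) :
    Set (Finset C) :=
  {W | ∃ L : List C, L.toFinset = W ∧ L.length = k ∧ phragValid A (fun _ => 0) ∅ L}

section Helpers
variable {C : Type*} [DecidableEq C]

def loadAfter (A : Multiset (Finset C)) : (Finset C → ℚ) → List C → (Finset C → ℚ)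
  | y, [] => y
  | y, c :: L => loadAfter A (fun b => if c ∈ b then phragLoadVal A y c else y b) L

def insAfter : Finset C → List C → Finset C
  | E, [] => E
  | E, c :: L => insAfter (insert c E) L

lemma phragValid_append (A : Multiset (Finset C)) (y : Finset C → ℚ) (E : Finset C)
    (P Q : List C) :
    phragValid A y E (P ++ Q) ↔
      phragValid A y E P ∧ phragValid A (loadAfter A y P) (insAfter E P) Q := by
  induction P generalizing y E with
  | nil => simp [phragValid, loadAfter, insAfter]
  | cons c P ih => simp [phragValid, loadAfter, insAfter, ih, and_assoc]

lemma loadAfter_append (A : Multiset (Finset C)) (y : Finset C → ℚ) (P Q : List C) :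
    loadAfter A y (P ++ Q) = loadAfter A (loadAfter A y P) Q := by
  induction P generalizing y with
  | nil => simp [loadAfter]
  | cons c P ih => simp [loadAfter, ih]

lemma insAfter_append (E : Finset C) (P Q : List C) :
    insAfter E (P ++ Q) = insAfter (insAfter E P) Q := by
  induction P generalizing E with
  | nil => simp [insAfter]
  | cons c P ih => simp [insAfter, ih]

lemma insAfter_eq (E : Finset C) (P : List C) : insAfter E P = E ∪ P.toFinset := by
  induction P generalizing E with
  | nil => simp [insAfter]
  | cons c P ih =>
      simp only [insAfter, ih, List.toFinset_cons]
      ext x; simp <;> tauto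

lemma card_insAfter_le (E : Finset C) (P : List C) :
    (insAfter E P).card ≤ E.card + P.length := by
  rw [insAfter_eq]
  calc (E ∪ P.toFinset).card ≤ E.card + P.toFinset.card := Finset.card_union_le _ _
    _ ≤ E.card + P.length := by have := P.toFinset_card_le; omega

lemma ballot_sum_nonneg (s : Multiset (Finset C)) (y : Finset C → ℚ)
    (hy : ∀ b, 0 ≤ y b) : 0 ≤ (s.map y).sum := by
  apply Multiset.sum_nonneg
  intro x hx
  obtain ⟨b', _, rfl⟩ := Multiset.mem_map.mp hx
  exact hy b'

lemma phragLoadVal_nonneg (A : Multiset (Finset C)) (y : Finset C → ℚ) (c : C)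
    (hy : ∀ b, 0 ≤ y b) : 0 ≤ phragLoadVal A y c := by
  apply div_nonneg
  · have := ballot_sum_nonneg (A.filter fun b => c ∈ b) y hy; linarith
  · exact_mod_cast Nat.zero_le _

lemma loadAfter_nonneg (A : Multiset (Finset C)) (y : Finset C → ℚ) (L : List C)
    (hy : ∀ b, 0 ≤ y b) : ∀ b, 0 ≤ loadAfter A y L b := by
  induction L generalizing y with
  | nil => simpa [loadAfter] using hy
  | cons c L ih =>
      apply ih
      intro b'
      split_ifs
      · exact phragLoadVal_nonneg A y c hy
      · exact hy b'

lemma loadAfter_of_not_mem (A : Multiset (Finset C)) (y : Finset C → ℚ) (L : List C)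
    (b : Finset C) (h : ∀ c ∈ L, c ∉ b) : loadAfter A y L b = y b := by
  induction L generalizing y with
  | nil => rfl
  | cons c L ih =>
      simp only [loadAfter]
      rw [ih _ (fun c hc => h c (List.mem_cons_of_mem _ hc))]
      simp [h c (List.mem_cons_self)]

lemma filter_erase_of_not_mem (A : Multiset (Finset C)) {b : Finset C} (hb : b ∈ A)
    {c : C} (hc : c ∉ b) :
    ((A.erase b).filter fun b' => c ∈ b') = A.filter fun b' => c ∈ b' := by
  conv_rhs => rw [← Multiset.cons_erase hb]
  rw [Multiset.filter_cons]; simp [hc]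

lemma filter_eq_cons_of_mem (A : Multiset (Finset C)) {b : Finset C} (hb : b ∈ A)
    {c : C} (hc : c ∈ b) :
    (A.filter fun b' => c ∈ b') = b ::ₘ ((A.erase b).filter fun b' => c ∈ b') := by
  conv_lhs => rw [← Multiset.cons_erase hb]
  rw [Multiset.filter_cons]; simp [hc]

lemma phragLoadVal_erase_eq (A : Multiset (Finset C)) {b : Finset C} (hb : b ∈ A)
    {c : C} (hc : c ∉ b) (y : Finset C → ℚ) :
    phragLoadVal (A.erase b) y c = phragLoadVal A y c := by
  unfold phragLoadVal
  rw [filter_erase_of_not_mem A hb hc]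

lemma phragLoadVal_lt_erase (A : Multiset (Finset C)) {b : Finset C} (hb : b ∈ A)
    {c : C} (hc : c ∈ b) (y : Finset C → ℚ) (hy : ∀ b', 0 ≤ y b') (hyb : y b = 0)
    (hne : ((A.erase b).filter fun b' => c ∈ b') ≠ 0) :
    phragLoadVal A y c < phragLoadVal (A.erase b) y c := by
  unfold phragLoadVal
  rw [filter_eq_cons_of_mem A hb hc]
  set t := (A.erase b).filter fun b' => c ∈ b' with ht
  have hcard : (0 : ℕ) < Multiset.card t := Multiset.card_pos.mpr hne
  have hsum : 0 ≤ (t.map y).sum := ballot_sum_nonneg t y hy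
  rw [Multiset.map_cons, Multiset.sum_cons, hyb, zero_add, Multiset.card_cons]
  push_cast
  apply div_lt_div_of_pos_left (by linarith) (by exact_mod_cast hcard)
  have : (0:ℚ) ≤ (Multiset.card t : ℚ) := by exact_mod_cast Nat.zero_le _
  linarith

lemma phragValid_props (A : Multiset (Finset C)) :
    ∀ (L : List C) (y : Finset C → ℚ) (E : Finset C), phragValid A y E L →
      L.Nodup ∧ ∀ c ∈ L, c ∉ E ∧ (A.filter fun b' => c ∈ b') ≠ 0 := by
  intro L
  induction L with
  | nil => intro y E _; simp
  | cons c L ih =>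
      intro y E hv
      obtain ⟨hcE, hcs, _, hrest⟩ := hv
      obtain ⟨hnd, hprop⟩ := ih _ _ hrest
      refine ⟨List.nodup_cons.mpr ⟨fun hcL => ?_, hnd⟩, ?_⟩
      · exact (hprop c hcL).1 (Finset.mem_insert_self c E)
      · intro e he
        rcases List.mem_cons.mp he with rfl | he'
        · exact ⟨hcE, hcs⟩
        · obtain ⟨h1, h2⟩ := hprop e he'
          exact ⟨fun hE => h1 (Finset.mem_insert_of_mem hE), h2⟩

lemma phragValid_extend [Fintype C] (A : Multiset (Finset C)) :
    ∀ (r : ℕ) (y : Finset C → ℚ) (E : Finset C),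
      r ≤ (Finset.univ.filter fun d => d ∉ E ∧ (A.filter fun b' => d ∈ b') ≠ 0).card →
      ∃ L : List C, L.length = r ∧ phragValid A y E L := by
  intro r
  induction r with
  | zero => intro y E _; exact ⟨[], rfl, trivial⟩
  | succ r ih =>
      intro y E h
      set T := Finset.univ.filter fun d => d ∉ E ∧ (A.filter fun b' => d ∈ b') ≠ 0 with hT
      have hTne : T.Nonempty := Finset.card_pos.mp (by omega)
      obtain ⟨c, hcT, hmin⟩ := T.exists_min_image (phragLoadVal A y) hTne
      have hc := Finset.mem_filter.mp hcT
      have hstep : r ≤ (Finset.univ.filter fun d =>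
          d ∉ insert c E ∧ (A.filter fun b' => d ∈ b') ≠ 0).card := by
        have hEq : (Finset.univ.filter fun d =>
            d ∉ insert c E ∧ (A.filter fun b' => d ∈ b') ≠ 0) = T.erase c := by
          ext x
          simp only [hT, Finset.mem_filter, Finset.mem_univ, true_and, Finset.mem_erase,
            Finset.mem_insert, not_or]
          tauto
        rw [hEq, Finset.card_erase_of_mem hcT]
        omega
      obtain ⟨L, hl, hv⟩ := ih _ (insert c E) hstep
      refine ⟨c :: L, by simp [hl], hc.2.1, hc.2.2, ?_, hv⟩
      intro d hdE hds
      exact hmin d (Finset.mem_filter.mpr ⟨Finset.mem_univ d, hdE, hds⟩)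

end Helpers

section Main
variable {C : Type*} [DecidableEq C]

lemma phragValid_erase (A : Multiset (Finset C)) {b : Finset C} (hb : b ∈ A) :
    ∀ (L : List C) (y : Finset C → ℚ) (E : Finset C),
      (∀ b', 0 ≤ y b') → y b = 0 → (∀ c ∈ L, c ∉ b) →
      phragValid A y E L → phragValid (A.erase b) y E L := by
  intro L
  induction L with
  | nil => intro y E _ _ _ _; trivial
  | cons c L ih =>
      intro y E hynn hyb hLb hv
      obtain ⟨hcE, hcs, hmin, hrest⟩ := hv
      have hcb : c ∉ b := hLb c (List.mem_cons_self)
      have hceq : phragLoadVal (A.erase b) y c = phragLoadVal A y c :=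
        phragLoadVal_erase_eq A hb hcb y
      refine ⟨hcE, by rw [filter_erase_of_not_mem A hb hcb]; exact hcs, ?_, ?_⟩
      · intro d hdE hds'
        rw [hceq]
        by_cases hdb : d ∈ b
        · have hdsA : (A.filter fun b' => d ∈ b') ≠ 0 := by
            rw [filter_eq_cons_of_mem A hb hdb]; exact Multiset.cons_ne_zero
          have h1 := hmin d hdE hdsA
          have h2 := le_of_lt (phragLoadVal_lt_erase A hb hdb y hynn hyb hds')
          linarith
        · rw [phragLoadVal_erase_eq A hb hdb]
          exact hmin d hdE (by rwa [filter_erase_of_not_mem A hb hdb] at hds')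
      · simp only [hceq]
        apply ih _ _ ?nonneg ?zero (fun e he => hLb e (List.mem_cons_of_mem _ he)) hrest
        case nonneg =>
          intro b'; split_ifs
          exacts [phragLoadVal_nonneg A y c hynn, hynn b']
        case zero => rw [if_neg hcb]; exact hyb

lemma no_b_winner [Fintype C] (A : Multiset (Finset C)) {b : Finset C} (hb : b ∈ A) (k : ℕ)
    (hY : ∀ W ∈ seqPhragmen A k, W ∩ b = ∅)
    (hsupp : k ≤ (Finset.univ.filter fun d => (A.filter fun b' => d ∈ b') ≠ 0).card) :
    ∀ (L P : List C), phragValid A (fun _ => 0) ∅ P → (∀ c ∈ P, c ∉ b) →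
      P.length + L.length = k →
      phragValid (A.erase b) (loadAfter A (fun _ => 0) P) (insAfter ∅ P) L →
      ∀ c ∈ L, c ∉ b := by
  intro L
  induction L with
  | nil => intro P _ _ _ _ c hc; simp at hc
  | cons c rest ih =>
      intro P hP hPb hlen hv
      set y := loadAfter A (fun _ => 0) P with hy
      set E := insAfter (∅ : Finset C) P with hE
      have hynn : ∀ b', 0 ≤ y b' := loadAfter_nonneg A _ P (fun _ => le_refl 0)
      have hyb : y b = 0 := loadAfter_of_not_mem A _ P b hPb
      obtain ⟨hcE, hcs', hmin', hrest⟩ := hv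
      have hcsA : (A.filter fun b' => c ∈ b') ≠ 0 := by
        by_cases hcb : c ∈ b
        · rw [filter_eq_cons_of_mem A hb hcb]; exact Multiset.cons_ne_zero
        · rwa [← filter_erase_of_not_mem A hb hcb]
      have hlen' : P.length + (rest.length + 1) = k := by
        simpa [List.length_cons] using hlen
      set T := Finset.univ.filter
        (fun d => d ∉ E ∧ (A.filter fun b' => d ∈ b') ≠ 0) with hT
      have hcT : c ∈ T := Finset.mem_filter.mpr ⟨Finset.mem_univ c, hcE, hcsA⟩
      obtain ⟨d, hdT, hdmin⟩ := T.exists_min_image (phragLoadVal A y) ⟨c, hcT⟩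
      obtain ⟨-, hdE, hdsA⟩ := Finset.mem_filter.mp hdT
      have hEcard : E.card ≤ P.length := by
        rw [hE]; simpa using card_insAfter_le (∅ : Finset C) P
      have build : d ∈ b → False := by
        intro hdb
        have hcard : k - P.length - 1 ≤ (Finset.univ.filter fun e =>
            e ∉ insert d E ∧ (A.filter fun b' => e ∈ b') ≠ 0).card := by
          have hEq : (Finset.univ.filter fun e =>
              e ∉ insert d E ∧ (A.filter fun b' => e ∈ b') ≠ 0)
              = (Finset.univ.filter fun e => (A.filter fun b' => e ∈ b') ≠ 0)
                \ insert d E := by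
            ext x; simp [Finset.mem_sdiff]; tauto
          rw [hEq]
          have h1 := Finset.card_le_card_sdiff_add_card
            (s := Finset.univ.filter fun e => (A.filter fun b' => e ∈ b') ≠ 0)
            (t := insert d E)
          have h2 : (insert d E).card ≤ E.card + 1 := Finset.card_insert_le d E
          omega
        obtain ⟨ext, hextlen, hextv⟩ := phragValid_extend A (k - P.length - 1)
            (fun b' => if d ∈ b' then phragLoadVal A y d else y b') (insert d E) hcard
        have hQ : phragValid A y E (d :: ext) := ⟨hdE, hdsA, fun e heE hes =>
          hdmin e (Finset.mem_filter.mpr ⟨Finset.mem_univ e, heE, hes⟩), hextv⟩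
        have hfull : phragValid A (fun _ => 0) ∅ (P ++ d :: ext) := by
          rw [phragValid_append]
          exact ⟨hP, by rw [← hy, ← hE]; exact hQ⟩
        have hW : (P ++ d :: ext).toFinset ∈ seqPhragmen A k :=
          ⟨P ++ d :: ext, rfl, by simp [hextlen]; omega, hfull⟩
        have hd : d ∈ (P ++ d :: ext).toFinset ∩ b :=
          Finset.mem_inter.mpr ⟨by simp, hdb⟩
        rw [hY _ hW] at hd
        exact Finset.notMem_empty d hd
      by_cases hdb : d ∈ b
      · exact (build hdb).elim
      · have hds' : ((A.erase b).filter fun b' => d ∈ b') ≠ 0 := by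
          rwa [filter_erase_of_not_mem A hb hdb]
        have hled : phragLoadVal (A.erase b) y c ≤ phragLoadVal A y d := by
          have := hmin' d hdE hds'
          rwa [phragLoadVal_erase_eq A hb hdb] at this
        have hcb : c ∉ b := by
          intro hcb
          have h1 : phragLoadVal A y d ≤ phragLoadVal A y c := hdmin c hcT
          have h2 : phragLoadVal A y c < phragLoadVal (A.erase b) y c :=
            phragLoadVal_lt_erase A hb hcb y hynn hyb hcs'
          linarith
        have hceq : phragLoadVal (A.erase b) y c = phragLoadVal A y c :=
          phragLoadVal_erase_eq A hb hcb y
        have hcmin : ∀ e, e ∉ E → (A.filter fun b' => e ∈ b') ≠ 0 →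
            phragLoadVal A y c ≤ phragLoadVal A y e := by
          intro e heE hes
          have h3 := hdmin e (Finset.mem_filter.mpr ⟨Finset.mem_univ e, heE, hes⟩)
          rw [hceq] at hled
          linarith
        intro e he
        rcases List.mem_cons.mp he with rfl | he'
        · exact hcb
        · refine ih (P ++ [c]) ?hPv ?hPbc ?hlen2 ?hv2 e he'
          case hPv =>
            rw [phragValid_append]
            exact ⟨hP, by rw [← hy, ← hE]; exact ⟨hcE, hcsA, hcmin, trivial⟩⟩
          case hPbc =>
            intro x hx
            rcases List.mem_append.mp hx with hx' | hx'
            · exact hPb x hx'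
            · rw [List.mem_singleton.mp hx']; exact hcb
          case hlen2 => simp; omega
          case hv2 =>
            rw [loadAfter_append, insAfter_append, ← hy, ← hE]
            show phragValid (A.erase b)
              (fun b' => if c ∈ b' then phragLoadVal A y c else y b') (insert c E) rest
            simp only [← hceq]
            exact hrest

end Main

/-- seqPhragmén satisfies participation for unrepresented voters: a voter who approves
no candidate of some winning committee cannot strictly benefit from abstaining
(w.r.t. Kelly's extension). -/
theorem seqPhragmen_participation_unrepresented
    {C : Type*} [DecidableEq C] [Fintype C] (hm : 1 < Fintype.card C)
    (A : Multiset (Finset C)) (hA : validProfile A)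
    (k : ℕ) (hk1 : 1 ≤ k) (hk2 : k < Fintype.card C)
    (b : Finset C) (hb : b ∈ A)
    (hunrep : ∃ W ∈ seqPhragmen A k, W ∩ b = ∅) :
    ¬ KellyStrict b (seqPhragmen (A.erase b) k) (seqPhragmen A k) := by
  rintro ⟨hweak, W, hWX, W', hW'Y, hlt⟩
  obtain ⟨W₀, hW₀Y, hW₀b⟩ := hunrep
  obtain ⟨L₀, hL₀W, hL₀len, hL₀v⟩ := hW₀Y
  have hL₀b : ∀ c ∈ L₀, c ∉ b := by
    intro c hc hcb
    have hmem : c ∈ W₀ ∩ b :=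
      Finset.mem_inter.mpr ⟨hL₀W ▸ List.mem_toFinset.mpr hc, hcb⟩
    rw [hW₀b] at hmem
    exact Finset.notMem_empty c hmem
  have hW₀X : W₀ ∈ seqPhragmen (A.erase b) k :=
    ⟨L₀, hL₀W, hL₀len,
      phragValid_erase A hb L₀ _ ∅ (fun _ => le_refl 0) rfl hL₀b hL₀v⟩
  have hYb : ∀ W'' ∈ seqPhragmen A k, W'' ∩ b = ∅ := by
    intro W'' h
    have hle := hweak W₀ hW₀X W'' h
    rw [hW₀b, Finset.card_empty, Nat.le_zero, Finset.card_eq_zero] at hle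
    exact hle
  obtain ⟨hnd, hprops⟩ := phragValid_props A L₀ _ ∅ hL₀v
  have hsub : L₀.toFinset ⊆
      Finset.univ.filter (fun d => (A.filter fun b' => d ∈ b') ≠ 0) := by
    intro x hx
    exact Finset.mem_filter.mpr
      ⟨Finset.mem_univ x, (hprops x (List.mem_toFinset.mp hx)).2⟩
  have hsupp : k ≤ (Finset.univ.filter
      fun d => (A.filter fun b' => d ∈ b') ≠ 0).card := by
    have hc := Finset.card_le_card hsub
    rwa [List.toFinset_card_of_nodup hnd, hL₀len] at hc
  obtain ⟨Lx, hLW, hLlen, hLv⟩ := hWX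
  have hWb : ∀ c ∈ Lx, c ∉ b :=
    no_b_winner A hb k hYb hsupp Lx [] trivial (by simp) (by simpa using hLlen) hLv
  rw [hYb W' hW'Y, Finset.card_empty] at hlt
  obtain ⟨x, hx⟩ := Finset.card_pos.mp hlt
  obtain ⟨hx1, hx2⟩ := Finset.mem_inter.mp hx
  exact hWb x (List.mem_toFinset.mp (hLW ▸ hx1)) hx2
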